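/- For every nonnegative integer n, the map (x,y,z,w) ↦ (−2w−1, 2x, −2z−1, 2y) is an injection from the set of integer 4-tuples (x,y,z,w) satisfying 9x² + 9y² + 9z² + 9w² + 2x + 4y + 6z + 8w = n into the set of 4-tuples satisfying the same quadratic form equal to 4n + 10. -/
import Mathlib


/-- For every `n ∈ ℕ`, the map
`(x,y,z,w) ↦ (-2w-1, 2x, -2z-1, 2y)` is an injection from the integer 4-tuples
with `9x² + 9y² + 9z² + 9w² + 2x + 4y + 6z + 8w = n` into the 4-tuples
satisfying the same quadratic form equal to `4n + 10`. -/
theorem selfconjugate_9cores_injection (n : ℕ) :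
    Set.InjOn
      (fun p : ℤ × ℤ × ℤ × ℤ =>
        ((-2 * p.2.2.2 - 1, 2 * p.1, -2 * p.2.2.1 - 1, 2 * p.2.1) : ℤ × ℤ × ℤ × ℤ))
      {p : ℤ × ℤ × ℤ × ℤ | 9 * p.1 ^ 2 + 9 * p.2.1 ^ 2 + 9 * p.2.2.1 ^ 2
        + 9 * p.2.2.2 ^ 2 + 2 * p.1 + 4 * p.2.1 + 6 * p.2.2.1 + 8 * p.2.2.2 = n}
    ∧ Set.MapsTo
      (fun p : ℤ × ℤ × ℤ × ℤ =>
        ((-2 * p.2.2.2 - 1, 2 * p.1, -2 * p.2.2.1 - 1, 2 * p.2.1) : ℤ × ℤ × ℤ × ℤ))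
      {p : ℤ × ℤ × ℤ × ℤ | 9 * p.1 ^ 2 + 9 * p.2.1 ^ 2 + 9 * p.2.2.1 ^ 2
        + 9 * p.2.2.2 ^ 2 + 2 * p.1 + 4 * p.2.1 + 6 * p.2.2.1 + 8 * p.2.2.2 = n}
      {p : ℤ × ℤ × ℤ × ℤ | 9 * p.1 ^ 2 + 9 * p.2.1 ^ 2 + 9 * p.2.2.1 ^ 2
        + 9 * p.2.2.2 ^ 2 + 2 * p.1 + 4 * p.2.1 + 6 * p.2.2.1 + 8 * p.2.2.2
        = 4 * n + 10} := by
  constructor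
  · rintro ⟨a, b, c, d⟩ _ ⟨a', b', c', d'⟩ _ h
    simp only [Prod.mk.injEq] at h
    obtain ⟨h1, h2, h3, h4⟩ := h
    refine Prod.ext (by linarith) (Prod.ext (by linarith) (Prod.ext (by linarith) (by linarith)))
  · rintro ⟨a, b, c, d⟩ hp
    simp only [Set.mem_setOf_eq] at hp ⊢
    ring_nf
    ring_nf at hp
    linarith
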